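/- Fix α < β. Let b, σ, h, k₊, k₋ : ℝ → ℝ satisfy: b, σ are C¹ with σ(x)² > 0 for all x, h is C¹ and positive, k₊, k₋ are C² and positive, and set q(x) = exp(∫₀ˣ 2b(y)/σ(y)² dy). Let J ⊂ (0,∞) be an open interval, λ : J → ℝ a function, and for each θ ∈ J let u_θ : ℝ → ℝ be twice continuously differentiable on [α,β], strictly positive on [α,β], satisfying (1/2)σ(x)²u_θ''(x) + b(x)u_θ'(x) + θ(h(x) − λ(θ))u_θ(x) = 0 for all x ∈ [α,β], the boundary conditions θk₊(α)u_θ(α) + u_θ'(α) = 0 and θk₋(β)u_θ(β) − u_θ'(β) = 0, and the normalization ∫_α^β (2θq(y)/σ(y)²)u_θ(y)² dy = 1. Assume the maps (θ,x) ↦ u_θ(x) and (θ,x) ↦ u_θ'(x) are continuous on J × [α,β]. Then λ is differentiable on J and λ'(θ) = (1/θ) ∫_α^β q(y)(u_θ'(y))² dy > 0 for every θ ∈ J. -/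

import Mathlib

open Set intervalIntegral
open MeasureTheory

/-- formula (3.13) of the paper's Lemma 3.1: the principal
eigenvalue is strictly increasing in the risk-sensitivity parameter `θ`. -/
theorem eigenvalue_derivative_theta
    (α β : ℝ) (hαβ : α < β)
    (b σ h kp km : ℝ → ℝ)
    (hb : ContDiff ℝ 1 b) (hσ : ContDiff ℝ 1 σ)
    (hσpos : ∀ x : ℝ, 0 < (σ x) ^ 2)
    (hh : ContDiff ℝ 1 h) (hhpos : ∀ x : ℝ, 0 < h x)
    (hkp : ContDiff ℝ 2 kp) (hkm : ContDiff ℝ 2 km)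
    (hkppos : ∀ x : ℝ, 0 < kp x) (hkmpos : ∀ x : ℝ, 0 < km x)
    (q : ℝ → ℝ)
    (hq : ∀ x : ℝ, q x = Real.exp (∫ y in (0 : ℝ)..x, 2 * b y / (σ y) ^ 2))
    (J : Set ℝ) (hJopen : IsOpen J) (hJconn : J.OrdConnected)
    (hJpos : J ⊆ Ioi (0 : ℝ))
    (lam : ℝ → ℝ) (u : ℝ → ℝ → ℝ)
    (hu1 : ∀ θ ∈ J, ∀ x ∈ Icc α β, DifferentiableAt ℝ (u θ) x)
    (hu2 : ∀ θ ∈ J, ∀ x ∈ Icc α β, DifferentiableAt ℝ (deriv (u θ)) x)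
    (hu2c : ∀ θ ∈ J, ContinuousOn (deriv (deriv (u θ))) (Icc α β))
    (hupos : ∀ θ ∈ J, ∀ x ∈ Icc α β, 0 < u θ x)
    (hODE : ∀ θ ∈ J, ∀ x ∈ Icc α β,
      (1 / 2) * (σ x) ^ 2 * deriv (deriv (u θ)) x + b x * deriv (u θ) x
        + θ * (h x - lam θ) * u θ x = 0)
    (hbcα : ∀ θ ∈ J, θ * kp α * u θ α + deriv (u θ) α = 0)
    (hbcβ : ∀ θ ∈ J, θ * km β * u θ β - deriv (u θ) β = 0)
    (hnorm : ∀ θ ∈ J,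
      ∫ y in α..β, (2 * θ * q y / (σ y) ^ 2) * (u θ y) ^ 2 = 1)
    (hucont : ContinuousOn (fun p : ℝ × ℝ => u p.1 p.2) (J ×ˢ Icc α β))
    (hu'cont : ContinuousOn (fun p : ℝ × ℝ => deriv (u p.1) p.2)
      (J ×ˢ Icc α β)) :
    ∀ θ ∈ J,
      HasDerivAt lam ((1 / θ) * ∫ y in α..β, q y * (deriv (u θ) y) ^ 2) θ ∧
      0 < (1 / θ) * ∫ y in α..β, q y * (deriv (u θ) y) ^ 2 := by
  intro θ hθ
  have hθpos : (0:ℝ) < θ := hJpos hθ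
  have hαle : α ≤ β := hαβ.le
  have hIcc : uIcc α β = Icc α β := uIcc_of_le hαle
  have hαm : α ∈ Icc α β := left_mem_Icc.mpr hαle
  have hβm : β ∈ Icc α β := right_mem_Icc.mpr hαle
  have hσne : ∀ x, (σ x) ^ 2 ≠ 0 := fun x => (hσpos x).ne'
  have contσ2 : Continuous fun x => (σ x) ^ 2 := hσ.continuous.pow 2
  have contc : Continuous fun y => 2 * b y / (σ y) ^ 2 :=
    (continuous_const.mul hb.continuous).div contσ2 hσne
  have hqpos : ∀ x, 0 < q x := fun x => (hq x) ▸ Real.exp_pos _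
  have hqder : ∀ x, HasDerivAt q (2 * b x / (σ x) ^ 2 * q x) x := by
    intro x
    have h1 : HasDerivAt (fun t => ∫ y in (0:ℝ)..t, 2 * b y / (σ y) ^ 2)
        (2 * b x / (σ x) ^ 2) x :=
      intervalIntegral.integral_hasDerivAt_right (contc.intervalIntegrable _ _)
        (contc.stronglyMeasurableAtFilter _ _) contc.continuousAt
    have h2 := h1.exp
    have hqe : q = fun t => Real.exp (∫ y in (0:ℝ)..t, 2 * b y / (σ y) ^ 2) := funext hq
    rw [← hqe, ← hq x] at h2
    convert h2 using 1; ring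
  have contq : Continuous q := by
    have hd : Differentiable ℝ q := fun x => (hqder x).differentiableAt
    exact hd.continuous
  have contq' : Continuous fun y => 2 * q y / (σ y) ^ 2 :=
    (continuous_const.mul contq).div contσ2 hσne
  have contu : ∀ t ∈ J, ContinuousOn (u t) (Icc α β) :=
    fun t ht x hx => (hu1 t ht x hx).continuousAt.continuousWithinAt
  have contu' : ∀ t ∈ J, ContinuousOn (deriv (u t)) (Icc α β) :=
    fun t ht x hx => (hu2 t ht x hx).continuousAt.continuousWithinAt
  have du'β : ∀ t ∈ J, deriv (u t) β = t * km β * u t β := by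
    intro t ht; have := hbcβ t ht; linarith
  have du'α : ∀ t ∈ J, deriv (u t) α = -(t * kp α * u t α) := by
    intro t ht; have := hbcα t ht; linarith
  -- derivative of the "momentum" q * u'
  have hPder : ∀ t ∈ J, ∀ x ∈ Icc α β,
      HasDerivAt (fun y => q y * deriv (u t) y)
        (2 * q x / (σ x) ^ 2 * (t * lam t - t * h x) * u t x) x := by
    intro t ht x hx
    have h1 := (hqder x).mul ((hu2 t ht x hx).hasDerivAt)
    have hO := hODE t ht x hx
    convert h1 using 1
    · rfl
    · rfl
    · rfl
    have hne := hσne x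
    have key : (σ x) ^ 2 * ((σ x) ^ 2)⁻¹ = 1 := mul_inv_cancel₀ hne
    linear_combination (-2 * q x * ((σ x) ^ 2)⁻¹) * hO + q x * deriv (deriv (u t)) x * key
  -- integrability of all the integrands we need
  have contf : ∀ t ∈ J, ∀ s ∈ J, ContinuousOn
      (fun y => 2 * q y / (σ y) ^ 2 * (t * lam t - t * h y) * u t y * u s y
        + q y * deriv (u t) y * deriv (u s) y) (Icc α β) := by
    intro t ht s hs
    exact (((contq'.continuousOn.mul
        ((continuous_const.sub (continuous_const.mul hh.continuous)).continuousOn)).mul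
        (contu t ht)).mul (contu s hs)).add
      ((contq.continuousOn.mul (contu' t ht)).mul (contu' s hs))
  have intf : ∀ t ∈ J, ∀ s ∈ J, IntervalIntegrable
      (fun y => 2 * q y / (σ y) ^ 2 * (t * lam t - t * h y) * u t y * u s y
        + q y * deriv (u t) y * deriv (u s) y) volume α β := by
    intro t ht s hs
    exact ((contf t ht s hs).mono hIcc.subset).intervalIntegrable
  have contg : ∀ t ∈ J, ∀ s ∈ J,
      ContinuousOn (fun y => 2 * q y / (σ y) ^ 2 * (u t y * u s y)) (Icc α β) :=
    fun t ht s hs => contq'.continuousOn.mul ((contu t ht).mul (contu s hs))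
  have intg : ∀ t ∈ J, ∀ s ∈ J, IntervalIntegrable
      (fun y => 2 * q y / (σ y) ^ 2 * (u t y * u s y)) volume α β :=
    fun t ht s hs => (((contg t ht s hs)).mono hIcc.subset).intervalIntegrable
  have intgh : ∀ t ∈ J, ∀ s ∈ J, IntervalIntegrable
      (fun y => 2 * q y / (σ y) ^ 2 * h y * (u t y * u s y)) volume α β := by
    intro t ht s hs
    exact (((contq'.mul hh.continuous).continuousOn.mul
      ((contu t ht).mul (contu s hs))).mono hIcc.subset).intervalIntegrable
  have contw : ContinuousOn (fun y => q y * (deriv (u θ) y) ^ 2) (Icc α β) :=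
    contq.continuousOn.mul ((contu' θ hθ).pow 2)
  have intw : IntervalIntegrable (fun y => q y * (deriv (u θ) y) ^ 2) volume α β :=
    (contw.mono hIcc.subset).intervalIntegrable
  -- the pairing identity (FTC)
  have pairing : ∀ t ∈ J, ∀ s ∈ J,
      (∫ y in α..β, (2 * q y / (σ y) ^ 2 * (t * lam t - t * h y) * u t y * u s y
        + q y * deriv (u t) y * deriv (u s) y))
      = q β * deriv (u t) β * u s β - q α * deriv (u t) α * u s α := by
    intro t ht s hs
    apply intervalIntegral.integral_eq_sub_of_hasDerivAt
    · intro x hx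
      rw [hIcc] at hx
      exact (hPder t ht x hx).mul ((hu1 s hs x hx).hasDerivAt)
    · exact intf t ht s hs
  -- bilinear quantities
  set II : ℝ → ℝ → ℝ := fun t s => ∫ y in α..β, 2 * q y / (σ y) ^ 2 * (u t y * u s y)
    with hIIdef
  set HH : ℝ → ℝ → ℝ := fun t s => ∫ y in α..β, 2 * q y / (σ y) ^ 2 * h y * (u t y * u s y)
    with hHHdef
  set BB : ℝ → ℝ → ℝ := fun t s =>
    q β * km β * (u t β * u s β) + q α * kp α * (u t α * u s α) with hBBdef
  -- identity E
  have identE : ∀ t ∈ J, ∀ s ∈ J,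
      (t * lam t - s * lam s) * II t s = (t - s) * (HH t s + BB t s) := by
    intro t ht s hs
    have P1 := pairing t ht s hs
    have P2 := pairing s hs t ht
    have hsub : (∫ y in α..β,
        ((2 * q y / (σ y) ^ 2 * (t * lam t - t * h y) * u t y * u s y
          + q y * deriv (u t) y * deriv (u s) y)
        - (2 * q y / (σ y) ^ 2 * (s * lam s - s * h y) * u s y * u t y
          + q y * deriv (u s) y * deriv (u t) y)))
        = (q β * deriv (u t) β * u s β - q α * deriv (u t) α * u s α)
          - (q β * deriv (u s) β * u t β - q α * deriv (u s) α * u t α) := by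
      rw [intervalIntegral.integral_sub (intf t ht s hs) (intf s hs t ht), P1, P2]
    have hcongr : (∫ y in α..β,
        ((2 * q y / (σ y) ^ 2 * (t * lam t - t * h y) * u t y * u s y
          + q y * deriv (u t) y * deriv (u s) y)
        - (2 * q y / (σ y) ^ 2 * (s * lam s - s * h y) * u s y * u t y
          + q y * deriv (u s) y * deriv (u t) y)))
        = ∫ y in α..β, ((t * lam t - s * lam s) * (2 * q y / (σ y) ^ 2 * (u t y * u s y))
            - (t - s) * (2 * q y / (σ y) ^ 2 * h y * (u t y * u s y))) := by
      apply intervalIntegral.integral_congr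
      intro y hy
      ring
    have hsplit : (∫ y in α..β,
        ((t * lam t - s * lam s) * (2 * q y / (σ y) ^ 2 * (u t y * u s y))
            - (t - s) * (2 * q y / (σ y) ^ 2 * h y * (u t y * u s y))))
        = (t * lam t - s * lam s) * II t s - (t - s) * HH t s := by
      rw [intervalIntegral.integral_sub ((intg t ht s hs).const_mul _)
        ((intgh t ht s hs).const_mul _), intervalIntegral.integral_const_mul,
        intervalIntegral.integral_const_mul]
    have hbdry : (q β * deriv (u t) β * u s β - q α * deriv (u t) α * u s α)
          - (q β * deriv (u s) β * u t β - q α * deriv (u s) α * u t α)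
        = (t - s) * BB t s := by
      simp only [hBBdef]
      rw [du'β t ht, du'β s hs, du'α t ht, du'α s hs]
      ring
    rw [hcongr, hsplit] at hsub
    linear_combination hsub + hbdry
  -- normalization: θ * II θ θ = 1
  have hIIθ : θ * II θ θ = 1 := by
    have h1 : (∫ y in α..β, (2 * θ * q y / (σ y) ^ 2) * (u θ y) ^ 2)
        = θ * II θ θ := by
      simp only [hIIdef]
      rw [← intervalIntegral.integral_const_mul]
      apply intervalIntegral.integral_congr
      intro y hy
      field_simp
    rw [← h1, hnorm θ hθ]
  -- single identity: ∫ q u'² = θ BB θ θ + θ HH θ θ - lam θ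
  have star : (∫ y in α..β, q y * (deriv (u θ) y) ^ 2)
      = θ * BB θ θ + θ * HH θ θ - lam θ := by
    have P := pairing θ hθ θ hθ
    have hcongr : (∫ y in α..β,
        (2 * q y / (σ y) ^ 2 * (θ * lam θ - θ * h y) * u θ y * u θ y
          + q y * deriv (u θ) y * deriv (u θ) y))
        = ∫ y in α..β, ((θ * lam θ) * (2 * q y / (σ y) ^ 2 * (u θ y * u θ y))
            - θ * (2 * q y / (σ y) ^ 2 * h y * (u θ y * u θ y))
            + q y * (deriv (u θ) y) ^ 2) := by
      apply intervalIntegral.integral_congr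
      intro y hy
      ring
    have hsplit : (∫ y in α..β,
        ((θ * lam θ) * (2 * q y / (σ y) ^ 2 * (u θ y * u θ y))
            - θ * (2 * q y / (σ y) ^ 2 * h y * (u θ y * u θ y))
            + q y * (deriv (u θ) y) ^ 2))
        = (θ * lam θ) * II θ θ - θ * HH θ θ + ∫ y in α..β, q y * (deriv (u θ) y) ^ 2 := by
      rw [intervalIntegral.integral_add (((intg θ hθ θ hθ).const_mul _).sub
          ((intgh θ hθ θ hθ).const_mul _)) intw,
        intervalIntegral.integral_sub ((intg θ hθ θ hθ).const_mul _)
          ((intgh θ hθ θ hθ).const_mul _),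
        intervalIntegral.integral_const_mul, intervalIntegral.integral_const_mul]
    have hbdry : q β * deriv (u θ) β * u θ β - q α * deriv (u θ) α * u θ α
        = θ * BB θ θ := by
      simp only [hBBdef]
      rw [du'β θ hθ, du'α θ hθ]; ring
    rw [hcongr, hsplit, hbdry] at P
    have hlmEq : θ * lam θ * II θ θ = lam θ := by
      linear_combination lam θ * hIIθ
    linarith [P, hlmEq]
  -- positivity of II t θ
  have hIpos : ∀ t ∈ J, 0 < II t θ := by
    intro t ht
    apply intervalIntegral_pos_of_pos_on (intg t ht θ hθ) _ hαβ
    intro y hy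
    have hyI : y ∈ Icc α β := Ioo_subset_Icc_self hy
    have hq1 := hqpos y
    have hs1 := hσpos y
    have h1 : 0 < 2 * q y / (σ y) ^ 2 := by positivity
    exact mul_pos h1 (mul_pos (hupos t ht y hyI) (hupos θ hθ y hyI))
  -- continuity of parameter-dependent quantities within J at θ
  have huat : ∀ x ∈ Icc α β, ContinuousWithinAt (fun t => u t x) J θ := by
    intro x hx
    have h1 : ContinuousWithinAt (fun t : ℝ => ((t, x) : ℝ × ℝ)) J θ :=
      (continuous_id.prodMk continuous_const).continuousWithinAt
    have h2 : ContinuousWithinAt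
        ((fun p : ℝ × ℝ => u p.1 p.2) ∘ fun t : ℝ => ((t, x) : ℝ × ℝ)) J θ :=
      ContinuousWithinAt.comp (hucont (θ, x) ⟨hθ, hx⟩) h1 (fun t ht => ⟨ht, hx⟩)
    exact h2
  have contin_param : ∀ v : ℝ → ℝ, Continuous v →
      ContinuousWithinAt (fun t => ∫ y in α..β, v y * (u t y * u θ y)) J θ := by
    intro v hv
    obtain ⟨ε, hε, hK⟩ : ∃ ε > 0, Icc (θ - ε) (θ + ε) ⊆ J := by
      obtain ⟨ε, hε, hball⟩ := Metric.isOpen_iff.mp hJopen θ hθ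
      refine ⟨ε / 2, by positivity, fun x hx => hball ?_⟩
      rw [Real.ball_eq_Ioo]
      rw [mem_Icc] at hx
      rw [mem_Ioo]
      constructor <;> linarith
    have hKc : IsCompact (Icc (θ - ε) (θ + ε) ×ˢ Icc α β) :=
      isCompact_Icc.prod isCompact_Icc
    have hcontF : ContinuousOn (fun p : ℝ × ℝ => v p.2 * (u p.1 p.2 * u θ p.2))
        (Icc (θ - ε) (θ + ε) ×ˢ Icc α β) := by
      apply ContinuousOn.mul ((hv.comp continuous_snd).continuousOn)
      apply ContinuousOn.mul (hucont.mono (prod_mono hK Subset.rfl))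
      intro p hp
      exact ((contu θ hθ p.2 hp.2).comp continuous_snd.continuousWithinAt
        (fun r hr => hr.2))
    obtain ⟨C, hC⟩ := hKc.exists_bound_of_continuousOn hcontF
    apply intervalIntegral.continuousWithinAt_of_dominated_interval
      (bound := fun _ => C)
    · filter_upwards [self_mem_nhdsWithin] with t ht
      apply ContinuousOn.aestronglyMeasurable _ measurableSet_uIoc
      have : uIoc α β ⊆ Icc α β := by
        rw [uIoc_of_le hαle]; exact Ioc_subset_Icc_self
      exact ((hv.continuousOn.mul ((contu t ht).mul (contu θ hθ))).mono this)
    · have hKnb : Icc (θ - ε) (θ + ε) ∈ nhds θ :=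
        Icc_mem_nhds (by linarith) (by linarith)
      filter_upwards [mem_nhdsWithin_of_mem_nhds hKnb] with t ht
      apply Filter.Eventually.of_forall
      intro y hy
      have hyI : y ∈ Icc α β := by
        rw [uIoc_of_le hαle] at hy; exact Ioc_subset_Icc_self hy
      exact hC ((t, y) : ℝ × ℝ) ⟨ht, hyI⟩
    · exact intervalIntegrable_const
    · apply Filter.Eventually.of_forall
      intro y hy
      have hyI : y ∈ Icc α β := by
        rw [uIoc_of_le hαle] at hy; exact Ioc_subset_Icc_self hy
      exact continuousWithinAt_const.mul ((huat y hyI).mul continuousWithinAt_const)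
  have hIc : ContinuousWithinAt (fun t => II t θ) J θ :=
    contin_param (fun y => 2 * q y / (σ y) ^ 2) contq'
  have hHc : ContinuousWithinAt (fun t => HH t θ) J θ :=
    contin_param (fun y => 2 * q y / (σ y) ^ 2 * h y) (contq'.mul hh.continuous)
  have hBc : ContinuousWithinAt (fun t => BB t θ) J θ := by
    apply ContinuousWithinAt.add
    · exact (continuousWithinAt_const.mul
        ((huat β hβm).mul continuousWithinAt_const))
    · exact (continuousWithinAt_const.mul
        ((huat α hαm).mul continuousWithinAt_const))
  -- the slope function
  set g : ℝ → ℝ := fun t => (HH t θ + BB t θ) / II t θ with hgdef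
  have hgc : ContinuousWithinAt g J θ := (hHc.add hBc).div hIc (hIpos θ hθ).ne'
  have hslope : ∀ t ∈ J, t ≠ θ → slope (fun r => r * lam r) θ t = g t := by
    intro t ht htne
    have hE := identE t ht θ hθ
    rw [slope_def_field]
    simp only [hgdef]
    rw [div_eq_div_iff (sub_ne_zero.mpr htne) (hIpos t ht).ne']
    linear_combination hE
  have hJn : J ∈ nhds θ := hJopen.mem_nhds hθ
  have hfd : HasDerivAt (fun r => r * lam r) (g θ) θ := by
    rw [hasDerivAt_iff_tendsto_slope]
    have h2 : Filter.Tendsto g (nhdsWithin θ J) (nhds (g θ)) := hgc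
    have hle : nhdsWithin θ {θ}ᶜ ≤ nhdsWithin θ J :=
      le_inf inf_le_left (Filter.le_principal_iff.mpr
        (mem_nhdsWithin_of_mem_nhds hJn))
    have h3 : Filter.Tendsto g (nhdsWithin θ {θ}ᶜ) (nhds (g θ)) := h2.mono_left hle
    apply h3.congr'
    filter_upwards [mem_nhdsWithin_of_mem_nhds hJn, self_mem_nhdsWithin]
      with t htJ htne
    exact (hslope t htJ htne).symm
  -- value of g θ
  have hgθ : g θ = θ * (HH θ θ + BB θ θ) := by
    have hII : II θ θ = 1 / θ := by
      rw [eq_div_iff hθpos.ne']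
      linear_combination hIIθ
    simp only [hgdef]
    rw [hII, div_div_eq_mul_div, div_one]
    ring
  -- derivative of lam
  have hdiv := hfd.div (hasDerivAt_id θ) (by simpa using hθpos.ne')
  have heq : lam =ᶠ[nhds θ] fun t => t * lam t / id t := by
    filter_upwards [hJn] with t ht
    have htpos : (0:ℝ) < t := hJpos ht
    simp only [id_eq]
    rw [mul_comm, mul_div_assoc, div_self htpos.ne', mul_one]
  have hlamder : HasDerivAt lam ((g θ * id θ - θ * lam θ * 1) / id θ ^ 2) θ :=
    hdiv.congr_of_eventuallyEq heq
  have hval : (g θ * id θ - θ * lam θ * 1) / id θ ^ 2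
      = (1 / θ) * ∫ y in α..β, q y * (deriv (u θ) y) ^ 2 := by
    simp only [id_eq]
    rw [hgθ, star]
    field_simp
    ring
  -- positivity of the integral
  have hWpos : 0 < ∫ y in α..β, q y * (deriv (u θ) y) ^ 2 := by
    have hu'α : deriv (u θ) α < 0 := by
      rw [du'α θ hθ]
      have h3 := mul_pos (mul_pos hθpos (hkppos α)) (hupos θ hθ α hαm)
      linarith
    have hcont : ContinuousAt (deriv (u θ)) α := (hu2 θ hθ α hαm).continuousAt
    have hev : ∀ᶠ x in nhds α, deriv (u θ) x < 0 :=
      Filter.Tendsto.eventually_lt_const hu'α hcont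
    obtain ⟨δ, hδ, hball⟩ := Metric.eventually_nhds_iff_ball.mp hev
    set γ := min (α + δ / 2) β with hγdef
    have hγ1 : α < γ := lt_min (by linarith) hαβ
    have hγβ : γ ≤ β := min_le_right _ _
    have int1 : IntervalIntegrable (fun y => q y * (deriv (u θ) y) ^ 2) volume α γ := by
      apply ContinuousOn.intervalIntegrable
      apply contw.mono
      rw [uIcc_of_le hγ1.le]
      exact Icc_subset_Icc le_rfl hγβ
    have int2 : IntervalIntegrable (fun y => q y * (deriv (u θ) y) ^ 2) volume γ β := by
      apply ContinuousOn.intervalIntegrable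
      apply contw.mono
      rw [uIcc_of_le hγβ]
      exact Icc_subset_Icc hγ1.le le_rfl
    have hsplit : (∫ y in α..β, q y * (deriv (u θ) y) ^ 2)
        = (∫ y in α..γ, q y * (deriv (u θ) y) ^ 2)
          + ∫ y in γ..β, q y * (deriv (u θ) y) ^ 2 :=
      (intervalIntegral.integral_add_adjacent_intervals int1 int2).symm
    have h1 : 0 < ∫ y in α..γ, q y * (deriv (u θ) y) ^ 2 := by
      apply intervalIntegral_pos_of_pos_on int1 _ hγ1
      intro y hy
      have hu'ne : deriv (u θ) y < 0 := by
        apply hball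
        rw [Metric.mem_ball, Real.dist_eq, abs_sub_lt_iff]
        have hy1 := hy.1
        have hy2 := hy.2
        have : y < α + δ / 2 := lt_of_lt_of_le hy2 (min_le_left _ _)
        constructor <;> linarith
      exact mul_pos (hqpos y) (pow_two_pos_of_ne_zero hu'ne.ne)
    have h2 : 0 ≤ ∫ y in γ..β, q y * (deriv (u θ) y) ^ 2 := by
      apply intervalIntegral.integral_nonneg hγβ
      intro y hy
      have := (hqpos y).le
      positivity
    rw [hsplit]; linarith
  constructor
  · rw [← hval]; exact hlamder
  · have : 0 < 1 / θ := by positivity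
    exact mul_pos this hWpos
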